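/- Let Ω ⊂ ℝ^d (d ≥ 1) be a bounded domain, p ∈ (0,1), ε > 0, β > 0, α ≥ 0, r > 0 and u, g ∈ L²(Ω). Define φ_ε(w) = β∫_Ω ψ_ε(w(x)²) dx + (α/2)‖w‖²_{L²}. Let v be any global minimizer over L²(Ω) of w ↦ (1/(2r))‖w − (u − r·g)‖²_{L²} + φ_ε(w), and let w* be the unique global minimizer over L²(Ω) of w ↦ (1/(2r))‖w − (u − r·g)‖²_{L²} + β∫_Ω [ψ_ε(u(x)²) + ψ_ε'(u(x)²)(w(x)² − u(x)²)] dx + (α/2)‖w‖²_{L²}. Then (g, v − u)_{L²} + φ_ε(v) − φ_ε(u) ≤ −(1/(2r))‖v − u‖²_{L²} ≤ −(1/(2r(4 + 2/p)²))‖w* − u‖²_{L²}. -/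

import Mathlib

open MeasureTheory Filter Topology RealInnerProductSpace

/-- The smooth approximation `ψ_ε` of `t ↦ t^{p/2}`:
`ψ_ε(t) = (p/2)·t/ε^{2−p} + (1 − p/2)·ε^p` for `0 ≤ t < ε²` and `ψ_ε(t) = t^{p/2}` for
`t ≥ ε²` (so `ψ_0(t) = t^{p/2}`). Exponents are real powers. -/
noncomputable def psi (p ε t : ℝ) : ℝ :=
  if t < ε ^ 2 then p / 2 * t / ε ^ (2 - p) + (1 - p / 2) * ε ^ p
  else t ^ (p / 2)

/-- The derivative `ψ_ε'(t) = (p/2)·min(ε^{p−2}, t^{(p−2)/2})` of `ψ_ε` (for `ε > 0`);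
since `t^{(p−2)/2} ≥ ε^{p−2}` precisely for `0 ≤ t ≤ ε²`, the minimum is the first
entry on `[0, ε²)` and the second one on `[ε², ∞)`. -/
noncomputable def psiDeriv (p ε t : ℝ) : ℝ :=
  if t < ε ^ 2 then p / 2 * ε ^ (p - 2) else p / 2 * t ^ ((p - 2) / 2)

section Scalar

variable {p ε : ℝ}

lemma sq_lt_sq_iff_abs (x : ℝ) (hε : 0 < ε) : x ^ 2 < ε ^ 2 ↔ |x| < ε := by
  rw [← sq_abs x]
  constructor
  · intro h; nlinarith [abs_nonneg x]
  · intro h; nlinarith [abs_nonneg x]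

lemma psiDeriv_sq_eq (hε : 0 < ε) (x : ℝ) :
    psiDeriv p ε (x ^ 2) = p / 2 * (max ε |x|) ^ (p - 2) := by
  unfold psiDeriv
  by_cases h : x ^ 2 < ε ^ 2
  · rw [if_pos h, max_eq_left ((sq_lt_sq_iff_abs x hε).1 h).le]
  · rw [if_neg h]
    have hax : ε ≤ |x| := by
      by_contra hc
      exact h ((sq_lt_sq_iff_abs x hε).2 (lt_of_not_ge hc))
    rw [max_eq_right hax]
    congr 1
    rw [← sq_abs x, ← Real.rpow_two |x|, ← Real.rpow_mul (abs_nonneg x)]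
    ring_nf

lemma psi_sq_eq_of_le (hε : 0 < ε) {x : ℝ} (hx : ε ≤ |x|) :
    psi p ε (x ^ 2) = |x| ^ p := by
  unfold psi
  rw [if_neg (by rw [sq_lt_sq_iff_abs x hε]; exact not_lt.2 hx)]
  rw [← sq_abs x, ← Real.rpow_two |x|, ← Real.rpow_mul (abs_nonneg x)]
  ring_nf

lemma psi_nonneg (hp0 : 0 < p) (hp1 : p < 1) (hε : 0 < ε) {t : ℝ} (ht : 0 ≤ t) :
    0 ≤ psi p ε t := by
  unfold psi
  split_ifs with h
  · have h1 : (0:ℝ) < ε ^ (2 - p) := Real.rpow_pos_of_pos hε _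
    have h2 : (0:ℝ) < ε ^ p := Real.rpow_pos_of_pos hε _
    have : 0 ≤ p / 2 * t / ε ^ (2 - p) := by positivity
    nlinarith
  · exact Real.rpow_nonneg ht _

lemma psi_le_bound (hp0 : 0 < p) (hp1 : p < 1) (hε : 0 < ε) {t : ℝ} (ht : 0 ≤ t) :
    psi p ε t ≤ (1 + ε ^ p + p / 2 * ε ^ (p - 2)) * (1 + t) := by
  have h1 : (0:ℝ) < ε ^ (2 - p) := Real.rpow_pos_of_pos hε _
  have h2 : (0:ℝ) < ε ^ p := Real.rpow_pos_of_pos hε _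
  have h3 : (0:ℝ) < ε ^ (p - 2) := Real.rpow_pos_of_pos hε _
  have hinv : ε ^ (p - 2) = (ε ^ (2 - p))⁻¹ := by
    rw [← Real.rpow_neg hε.le]; ring_nf
  unfold psi
  split_ifs with h
  · have key : p / 2 * t / ε ^ (2 - p) = p / 2 * ε ^ (p - 2) * t := by
      rw [hinv]; ring
    rw [key]
    nlinarith [mul_nonneg (mul_nonneg (by linarith : (0:ℝ) ≤ p/2) h3.le) ht]
  · have : t ^ (p / 2) ≤ 1 + t := by
      rcases le_or_gt t 1 with hle | hgt
      · have := Real.rpow_le_one ht hle (by positivity : 0 ≤ p / 2)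
        linarith
      · have h4 : t ^ (p / 2) ≤ t ^ (1:ℝ) :=
          Real.rpow_le_rpow_of_exponent_le hgt.le (by linarith)
        rw [Real.rpow_one] at h4
        linarith
    nlinarith [mul_nonneg (show (0:ℝ) ≤ ε ^ p + p / 2 * ε ^ (p - 2) by positivity)
      (show (0:ℝ) ≤ 1 + t by linarith)]

lemma psiDeriv_pos (hp0 : 0 < p) (hε : 0 < ε) {t : ℝ} (ht : 0 ≤ t) :
    0 < psiDeriv p ε t := by
  unfold psiDeriv
  split_ifs with h
  · have := Real.rpow_pos_of_pos hε (p - 2); positivity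
  · have htpos : 0 < t := lt_of_lt_of_le (by positivity) (not_lt.1 h)
    have := Real.rpow_pos_of_pos htpos ((p - 2) / 2); positivity

lemma psiDeriv_le (hp0 : 0 < p) (hp1 : p < 1) (hε : 0 < ε) {t : ℝ} (ht : 0 ≤ t) :
    psiDeriv p ε t ≤ p / 2 * ε ^ (p - 2) := by
  unfold psiDeriv
  split_ifs with h
  · exact le_refl _
  · have hεsq : (0:ℝ) < ε ^ 2 := by positivity
    have hts : ε ^ 2 ≤ t := not_lt.1 h
    have key : t ^ ((p - 2) / 2) ≤ (ε ^ 2) ^ ((p - 2) / 2) :=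
      Real.rpow_le_rpow_of_nonpos hεsq hts (by linarith)
    have e : (ε ^ 2 : ℝ) ^ ((p - 2) / 2) = ε ^ (p - 2) := by
      rw [← Real.rpow_two, ← Real.rpow_mul hε.le]; ring_nf
    rw [e] at key
    exact mul_le_mul_of_nonneg_left key (by linarith)

/-- Tangent-line inequality for the power function. -/
lemma rpow_tangent (hp0 : 0 < p) (hp1 : p < 1) {s t : ℝ} (hs : 0 ≤ s) (ht : 0 < t) :
    s ^ (p / 2) ≤ t ^ (p / 2) + p / 2 * t ^ ((p - 2) / 2) * (s - t) := by
  have hz : -1 ≤ s / t - 1 := by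
    have : 0 ≤ s / t := div_nonneg hs ht.le
    linarith
  have hber := rpow_one_add_le_one_add_mul_self hz (by positivity : (0:ℝ) ≤ p / 2)
    (by linarith : p / 2 ≤ 1)
  have e1 : (1 + (s / t - 1)) = s / t := by ring
  rw [e1] at hber
  have htp : (0:ℝ) < t ^ (p / 2) := Real.rpow_pos_of_pos ht _
  have e2 : (s / t) ^ (p / 2) = s ^ (p / 2) / t ^ (p / 2) := Real.div_rpow hs ht.le _
  rw [e2] at hber
  have e3 : t ^ ((p - 2) / 2) = t ^ (p / 2) / t := by
    have : t ^ ((p - 2) / 2) = t ^ (p / 2 - 1) := by ring_nf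
    rw [this, Real.rpow_sub ht, Real.rpow_one]
  rw [e3]
  have hber2 : s ^ (p / 2) ≤ t ^ (p / 2) * (1 + p / 2 * (s / t - 1)) := by
    rw [div_le_iff₀ htp] at hber
    linarith [hber]
  calc s ^ (p / 2) ≤ t ^ (p / 2) * (1 + p / 2 * (s / t - 1)) := hber2
    _ = t ^ (p / 2) + p / 2 * (t ^ (p / 2) / t) * (s - t) := by
        field_simp

/-- Concavity: ψ lies below its tangent lines. -/
lemma psi_tangent (hp0 : 0 < p) (hp1 : p < 1) (hε : 0 < ε) {s t : ℝ}
    (hs : 0 ≤ s) (ht : 0 ≤ t) :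
    psi p ε s ≤ psi p ε t + psiDeriv p ε t * (s - t) := by
  have hε2 : (0:ℝ) < ε ^ 2 := by positivity
  have hεp2 : (0:ℝ) < ε ^ (p - 2) := Real.rpow_pos_of_pos hε _
  have hinv : p / 2 * s / ε ^ (2 - p) = p / 2 * ε ^ (p - 2) * s := by
    rw [show ε ^ (p-2) = (ε ^ (2-p))⁻¹ by rw [← Real.rpow_neg hε.le]; ring_nf]; ring
  have hinv' : ∀ u : ℝ, p / 2 * u / ε ^ (2 - p) = p / 2 * ε ^ (p - 2) * u := by
    intro u
    rw [show ε ^ (p-2) = (ε ^ (2-p))⁻¹ by rw [← Real.rpow_neg hε.le]; ring_nf]; ring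
  have He1 : (ε ^ 2 : ℝ) ^ (p / 2) = ε ^ p := by
    rw [← Real.rpow_two, ← Real.rpow_mul hε.le]; ring_nf
  have He2 : (ε ^ 2 : ℝ) ^ ((p - 2) / 2) = ε ^ (p - 2) := by
    rw [← Real.rpow_two, ← Real.rpow_mul hε.le]; ring_nf
  have He3 : ε ^ (p - 2) * ε ^ 2 = ε ^ p := by
    rw [← Real.rpow_two, ← Real.rpow_add hε]; ring_nf
  unfold psi psiDeriv
  by_cases hts : t < ε ^ 2 <;> by_cases hss : s < ε ^ 2
  · rw [if_pos hts, if_pos hss, if_pos hts, hinv' s, hinv' t]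
    exact le_of_eq (by ring)
  · -- t in linear region, s in power region
    rw [if_pos hts, if_neg hss, if_pos hts, hinv' t]
    have htan := rpow_tangent hp0 hp1 hs hε2
    rw [He1, He2] at htan
    nlinarith [htan]
  · -- t power region, s linear region
    rw [if_neg hts, if_pos hss, if_neg hts, hinv' s]
    have hts' : ε ^ 2 ≤ t := not_lt.1 hts
    have htpos : (0:ℝ) < t := lt_of_lt_of_le hε2 hts'
    have htan := rpow_tangent hp0 hp1 hε2.le htpos
    rw [He1] at htan
    -- slope comparison : t ^ ((p-2)/2) ≤ ε ^ (p-2)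
    have hsl : t ^ ((p - 2) / 2) ≤ ε ^ (p - 2) := by
      have := Real.rpow_le_rpow_of_nonpos hε2 hts' (by linarith : (p-2)/2 ≤ 0)
      rwa [He2] at this
    have hslpos : 0 < t ^ ((p - 2) / 2) := Real.rpow_pos_of_pos htpos _
    -- ψ(s) = ε^p + (p/2) ε^{p-2} (s - ε^2)
    have hneg : s - ε ^ 2 ≤ 0 := by linarith
    nlinarith [mul_le_mul_of_nonpos_right hsl hneg]
  · rw [if_neg hts, if_neg hss, if_neg hts]
    exact rpow_tangent hp0 hp1 hs (lt_of_lt_of_le hε2 (not_lt.1 hts))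

lemma quad_lin_zero {S L : ℝ} (hS : 0 < S) (h : ∀ q : ℚ, 0 ≤ S * (q:ℝ) ^ 2 + L * q) :
    L = 0 := by
  have hall : ∀ y : ℝ, 0 ≤ S * y ^ 2 + L * y := by
    have hcl : IsClosed {y : ℝ | 0 ≤ S * y ^ 2 + L * y} :=
      isClosed_le continuous_const (by continuity)
    have hd : Dense {y : ℝ | 0 ≤ S * y ^ 2 + L * y} :=
      Rat.denseRange_cast.mono (by rintro _ ⟨q, rfl⟩; exact h q)
    intro y
    have : {y : ℝ | 0 ≤ S * y ^ 2 + L * y} = Set.univ := by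
      rw [← hcl.closure_eq]; exact hd.closure_eq
    exact (this ▸ Set.mem_univ y : y ∈ {y : ℝ | 0 ≤ S * y ^ 2 + L * y})
  have h1 := hall (-L / (2 * S))
  have key : S * (-L / (2 * S)) ^ 2 + L * (-L / (2 * S)) = -L ^ 2 / (4 * S) := by
    field_simp; ring
  rw [key] at h1
  have h2 : 0 < 4 * S := by linarith
  rw [le_div_iff₀ h2] at h1
  have : L ^ 2 ≤ 0 := by linarith
  nlinarith [sq_nonneg L]

lemma stat_v (hp0 : 0 < p) (hp1 : p < 1) (hε : 0 < ε) {c1 c2 x q : ℝ}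
    (hc1 : 0 < c1) (hc2 : 0 ≤ c2)
    (h : ∀ h' : ℚ, (x - q) ^ 2 + c1 * psi p ε (x ^ 2) + c2 * x ^ 2 ≤
      (x + h' - q) ^ 2 + c1 * psi p ε ((x + h') ^ 2) + c2 * (x + h') ^ 2) :
    x * (1 + c2 + c1 * psiDeriv p ε (x ^ 2)) = q := by
  set D := psiDeriv p ε (x ^ 2) with hDdef
  have hD : 0 < D := psiDeriv_pos hp0 hε (sq_nonneg x)
  have hS : 0 < 1 + c2 + c1 * D := by positivity
  have key : ∀ h' : ℚ, 0 ≤ (1 + c2 + c1 * D) * (h':ℝ) ^ 2 +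
      (2 * (x * (1 + c2 + c1 * D) - q)) * h' := by
    intro h'
    have h1 := h h'
    have h2 := psi_tangent hp0 hp1 hε (sq_nonneg (x + (h':ℝ))) (sq_nonneg x)
    rw [← hDdef] at h2
    nlinarith [mul_le_mul_of_nonneg_left h2 hc1.le]
  have := quad_lin_zero hS key
  linarith

lemma stat_quad {T q x : ℝ} (hT : 0 ≤ T)
    (h : ∀ h' : ℚ, (x - q) ^ 2 + T * x ^ 2 ≤ (x + h' - q) ^ 2 + T * (x + h') ^ 2) :
    x * (1 + T) = q := by
  have hS : 0 < 1 + T := by linarith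
  have key : ∀ h' : ℚ, 0 ≤ (1 + T) * (h':ℝ) ^ 2 + (2 * (x * (1 + T) - q)) * h' := by
    intro h'
    have h1 := h h'
    nlinarith
  have := quad_lin_zero hS key
  linarith



section Alg

/-- Case B key step. -/
private lemma algB_step {Y X Ma v : ℝ} (hY0 : 0 < Y) (hMa0 : 0 < Ma) (hMav : Ma ≤ v)
    (hrp : Y * Ma ^ 2 ≤ X * v ^ 2) : v * (Y - X) ≤ 2 * (v - Ma) * Y := by
  have hv0 : 0 < v := lt_of_lt_of_le hMa0 hMav
  nlinarith [hrp, mul_nonneg hY0.le (sq_nonneg (v - Ma)), mul_pos hY0 hv0]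

/-- Case B conclusion. -/
private lemma algB_final {c2 θv θa v w a Ma K : ℝ} (hc2 : 0 ≤ c2) (hθa0 : 0 < θa)
    (hθ : θv ≤ θa) (hMa0 : 0 < Ma)
    (hwvA : (w - v) * (1 + c2 + θa) = v * (θv - θa))
    (hstep : v * (θa - θv) ≤ 2 * (v - Ma) * θa)
    (haMa : a ≤ Ma) (hMav : Ma ≤ v) (hK : 1 ≤ K) :
    |w - a| ≤ K * |v - a| := by
  have hA0 : 0 < 1 + c2 + θa := by linarith
  have hv0 : 0 < v := lt_of_lt_of_le hMa0 hMav
  have hwv_le : w ≤ v := by nlinarith [hwvA, mul_nonneg hv0.le (sub_nonneg.2 hθ)]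
  have h2 : (v - w) * (1 + c2 + θa) ≤ 2 * (v - a) * (1 + c2 + θa) := by
    have e : (v - w) * (1 + c2 + θa) = v * (θa - θv) := by linarith [hwvA]
    rw [e]
    have h3 : 2 * (v - Ma) * θa ≤ 2 * (v - a) * (1 + c2 + θa) := by
      nlinarith [sub_nonneg.2 hMav, sub_nonneg.2 haMa]
    linarith
  have hvw2 : v - w ≤ 2 * (v - a) := le_of_mul_le_mul_right (by linarith) hA0
  have habs : |w - a| ≤ v - a := by
    rw [abs_le]; constructor <;> linarith
  have hva : 0 ≤ v - a := by linarith
  calc |w - a| ≤ v - a := habs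
    _ ≤ K * (v - a) := by nlinarith
    _ = K * |v - a| := by rw [abs_of_nonneg hva]

/-- Star inequality extraction. -/
private lemma alg_star {c1 c2 q v w θa Pv Wp : ℝ} (hc1 : 0 < c1) (hc2 : 0 ≤ c2)
    (hPv : 0 ≤ Pv) (hθa0 : 0 < θa) (hvw : v ≤ w)
    (hqw : q = w * (1 + c2 + θa))
    (hf : (v - q) ^ 2 + c1 * Pv + c2 * v ^ 2 ≤ (w - q) ^ 2 + c1 * Wp + c2 * w ^ 2) :
    (w - v) * (2 * w) * θa ≤ c1 * Wp := by
  nlinarith [hf, sq_nonneg (w - v), mul_nonneg hc2 (sq_nonneg (w - v)),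
    mul_nonneg hc1.le hPv]

/-- A-negative, large w. -/
private lemma algA_neg {p K v w b : ℝ} (hp0 : 0 < p) (hpK : p * K = 4 * p + 2)
    (hb : 0 < b) (hv0 : 0 ≤ v) (hstar : p * (w - v) ≤ b) (hwb : b < w) :
    w + b ≤ K * (v + b) := by
  have key : p * (w + b) ≤ p * (K * (v + b)) := by nlinarith
  exact le_of_mul_le_mul_left key hp0

/-- A-positive, split case (i). -/
private lemma algA_pos_i {p K v w a Mv : ℝ} (hp0 : 0 < p) (hpK : p * K = 4 * p + 2)
    (hstar : p * (w - v) ≤ a) (hsplit : 2 * Mv ≤ a) (hvMv : v ≤ Mv) (hv0 : 0 ≤ v)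
    (hwa : a < w) : w - a ≤ K * (a - v) := by
  have hav : 0 ≤ a - v := by linarith
  have key : p * (w - a) ≤ p * (K * (a - v)) := by nlinarith
  exact le_of_mul_le_mul_left key hp0

/-- A-positive case (ii) key step. -/
private lemma algA_pos_ii_step {X Y Mv a v : ℝ} (hY0 : 0 < Y) (hMv0 : 0 < Mv)
    (hvMv : v ≤ Mv) (hv0 : 0 ≤ v) (hYX : Y ≤ X) (hMva : Mv ≤ a) (hsplit : a ≤ 2 * Mv)
    (hrp : X * Mv ^ 2 ≤ Y * a ^ 2) : v * (X - Y) ≤ 3 * (a - Mv) * Y := by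
  have step : Mv * (v * (X - Y)) ≤ Mv * (3 * (a - Mv) * Y) := by
    have s1 : Mv * (v * (X - Y)) ≤ Mv * (Mv * (X - Y)) := by
      linarith only [mul_nonneg (mul_nonneg hMv0.le (sub_nonneg.2 hvMv))
        (sub_nonneg.2 hYX)]
    have s2 : Mv * (Mv * (X - Y)) ≤ Y * a ^ 2 - Mv ^ 2 * Y := by nlinarith [hrp]
    have s3 : Y * a ^ 2 - Mv ^ 2 * Y ≤ Mv * (3 * (a - Mv) * Y) := by
      nlinarith [mul_nonneg hY0.le (sub_nonneg.2 hMva)]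
    linarith
  exact le_of_mul_le_mul_left step hMv0

/-- A-positive case (ii) conclusion. -/
private lemma algA_pos_ii_final {c2 θv θa v w a Mv K : ℝ} (hc2 : 0 ≤ c2) (hθa0 : 0 < θa)
    (hwvA : (w - v) * (1 + c2 + θa) = v * (θv - θa))
    (hKA : v * (θv - θa) ≤ 3 * (a - Mv) * θa)
    (hvMv : v ≤ Mv) (hMva : Mv ≤ a) (hwa : a < w) (hK : 3 ≤ K) :
    w - a ≤ K * (a - v) := by
  have hA0 : 0 < 1 + c2 + θa := by linarith
  have h3 : 3 * (a - Mv) * θa ≤ 3 * (a - v) * (1 + c2 + θa) := by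
    nlinarith [sub_nonneg.2 hMva, sub_nonneg.2 hvMv, sub_nonneg.2 (le_trans hvMv hMva)]
  have h4 : (w - v) * (1 + c2 + θa) ≤ 3 * (a - v) * (1 + c2 + θa) := by
    rw [hwvA]; linarith
  have h5 : w - v ≤ 3 * (a - v) := le_of_mul_le_mul_right (by linarith) hA0
  nlinarith [sub_nonneg.2 (le_trans hvMv hMva)]

end Alg

set_option maxHeartbeats 1000000 in
/-- Main scalar comparison lemma, case `0 ≤ q`. -/
lemma scalar_main_nonneg {p ε : ℝ} (hp0 : 0 < p) (hp1 : p < 1) (hε : 0 < ε)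
    {c1 c2 a q v w : ℝ}
    (hc1 : 0 < c1) (hc2 : 0 ≤ c2) (hq : 0 ≤ q)
    (hv : v * (1 + c2 + c1 * psiDeriv p ε (v ^ 2)) = q)
    (hw : w * (1 + c2 + c1 * psiDeriv p ε (a ^ 2)) = q)
    (hfvw : (v - q) ^ 2 + c1 * psi p ε (v ^ 2) + c2 * v ^ 2 ≤
      (w - q) ^ 2 + c1 * psi p ε (w ^ 2) + c2 * w ^ 2) :
    |w - a| ≤ (4 + 2 / p) * |v - a| := by
  have hKpos : (0:ℝ) < 4 + 2 / p := by positivity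
  have hK1 : (1:ℝ) ≤ 4 + 2 / p := by
    have : 0 < 2 / p := by positivity
    linarith
  have hpK : p * (4 + 2 / p) = 4 * p + 2 := by field_simp
  have hK3 : (3:ℝ) ≤ 4 + 2 / p := by
    have : 0 < 2 / p := by positivity
    linarith
  rw [psiDeriv_sq_eq hε] at hv hw
  set Mv : ℝ := max ε |v| with hMvdef
  set Ma : ℝ := max ε |a| with hMadef
  have hMvε : ε ≤ Mv := le_max_left _ _
  have hMaε : ε ≤ Ma := le_max_left _ _
  have hMv0 : 0 < Mv := lt_of_lt_of_le hε hMvε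
  have hMa0 : 0 < Ma := lt_of_lt_of_le hε hMaε
  have hvMv : |v| ≤ Mv := le_max_right _ _
  have haMa : |a| ≤ Ma := le_max_right _ _
  set X : ℝ := Mv ^ (p - 2) with hXdef
  set Y : ℝ := Ma ^ (p - 2) with hYdef
  have hX0 : 0 < X := Real.rpow_pos_of_pos hMv0 _
  have hY0 : 0 < Y := Real.rpow_pos_of_pos hMa0 _
  set θv : ℝ := c1 * (p / 2 * X) with hθvdef
  set θa : ℝ := c1 * (p / 2 * Y) with hθadef
  have hθv0 : 0 < θv := by positivity
  have hθa0 : 0 < θa := by positivity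
  have hA0 : 0 < 1 + c2 + θa := by positivity
  have hV0 : 0 < 1 + c2 + θv := by positivity
  have hv' : v * (1 + c2 + θv) = q := hv
  have hw' : w * (1 + c2 + θa) = q := hw
  have hv0 : 0 ≤ v := by
    by_contra h
    push_neg at h
    linarith only [mul_neg_of_neg_of_pos h hV0, hv', hq]
  have hw0 : 0 ≤ w := by
    by_contra h
    push_neg at h
    linarith only [mul_neg_of_neg_of_pos h hA0, hw', hq]
  have hwvA : (w - v) * (1 + c2 + θa) = v * (θv - θa) := by
    linear_combination hw' - hv'
  rcases le_or_gt Ma Mv with hMM | hMM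
  · -- CASE B : Ma ≤ Mv, so θv ≤ θa
    have hXY : X ≤ Y := Real.rpow_le_rpow_of_nonpos hMa0 hMM (by linarith)
    have hθ : θv ≤ θa := by
      rw [hθvdef, hθadef]
      have h5 : p / 2 * X ≤ p / 2 * Y := mul_le_mul_of_nonneg_left hXY (by linarith)
      exact mul_le_mul_of_nonneg_left h5 hc1.le
    by_cases hθe : θv = θa
    · have hwveq : w = v := by
        have h6 : w * (1 + c2 + θa) = v * (1 + c2 + θa) := by rw [hw', ← hθe]; exact hv'.symm
        exact mul_right_cancel₀ (ne_of_gt hA0) h6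
      calc |w - a| = |v - a| := by rw [hwveq]
        _ = 1 * |v - a| := (one_mul _).symm
        _ ≤ (4 + 2 / p) * |v - a| := mul_le_mul_of_nonneg_right hK1 (abs_nonneg _)
    · have hθlt : θv < θa := lt_of_le_of_ne hθ hθe
      have hMalt : Ma < Mv := by
        rcases lt_or_ge Ma Mv with h | h
        · exact h
        · exfalso
          have h7 : Mv = Ma := le_antisymm h hMM
          rw [hθvdef, hθadef, hXdef, hYdef, h7] at hθlt
          exact lt_irrefl _ hθlt
      have hMveq : Mv = v := by
        have h1 : ε < Mv := lt_of_le_of_lt hMaε hMalt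
        rcases max_cases ε |v| with ⟨h3, _⟩ | ⟨h3, _⟩
        · rw [hMvdef] at h1 ⊢; rw [h3] at h1; linarith
        · rw [hMvdef, h3, abs_of_nonneg hv0]
      have hMav : Ma ≤ v := by rw [← hMveq]; exact hMalt.le
      have hrp : Y * Ma ^ 2 ≤ X * v ^ 2 := by
        rw [hXdef, hYdef, hMveq]
        have hvpos : 0 < v := lt_of_lt_of_le hMa0 hMav
        have e1 : Ma ^ (p - 2) * Ma ^ 2 = Ma ^ p := by
          rw [← Real.rpow_two, ← Real.rpow_add hMa0]; ring_nf
        have e2 : v ^ (p - 2) * v ^ 2 = v ^ p := by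
          rw [← Real.rpow_two, ← Real.rpow_add hvpos]; ring_nf
        rw [e1, e2]
        exact Real.rpow_le_rpow hMa0.le hMav hp0.le
      have hstepXY : v * (Y - X) ≤ 2 * (v - Ma) * Y := algB_step hY0 hMa0 hMav hrp
      have hstep : v * (θa - θv) ≤ 2 * (v - Ma) * θa := by
        rw [hθvdef, hθadef]
        have hc1p : (0:ℝ) ≤ c1 * (p / 2) := by positivity
        linarith only [mul_le_mul_of_nonneg_left hstepXY hc1p]
      exact algB_final hc2 hθa0 hθ hMa0 hwvA hstep (le_trans (le_abs_self a) haMa) hMav hK1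
  · -- CASE A : Mv < Ma
    have hYX : Y ≤ X := Real.rpow_le_rpow_of_nonpos hMv0 hMM.le (by linarith)
    have hθ : θa ≤ θv := by
      rw [hθvdef, hθadef]
      have h5 : p / 2 * Y ≤ p / 2 * X := mul_le_mul_of_nonneg_left hYX (by linarith)
      exact mul_le_mul_of_nonneg_left h5 hc1.le
    have hvw : v ≤ w := by
      have h8 : 0 ≤ (w - v) * (1 + c2 + θa) := by
        rw [hwvA]; exact mul_nonneg hv0 (by linarith)
      rcases le_or_gt v w with h | h
      · exact h
      · exfalso
        have h9 : (w - v) * (1 + c2 + θa) < 0 :=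
          mul_neg_of_neg_of_pos (by linarith) hA0
        linarith only [h8, h9]
    have hεMa : ε < Ma := lt_of_le_of_lt hMvε hMM
    have hMaeq : Ma = |a| := by
      rcases max_cases ε |a| with ⟨h3, _⟩ | ⟨h3, _⟩
      · rw [hMadef] at hεMa ⊢; rw [h3] at hεMa; linarith
      · rw [hMadef]; exact h3
    have hvMv' : v ≤ Mv := le_trans (le_abs_self v) hvMv
    -- (**) : if Ma ≤ w then p * (w - v) ≤ Ma
    have hstar : Ma ≤ w → p * (w - v) ≤ Ma := by
      intro hbw
      have hwε : ε ≤ |w| := by rw [abs_of_nonneg hw0]; linarith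
      have hpsiw : psi p ε (w ^ 2) = w ^ p := by
        rw [psi_sq_eq_of_le hε hwε, abs_of_nonneg hw0]
      have hψv : 0 ≤ psi p ε (v ^ 2) := psi_nonneg hp0 hp1 hε (sq_nonneg v)
      have hwpos : 0 < w := lt_of_lt_of_le hMa0 hbw
      have hkey : (w - v) * (2 * w) * θa ≤ c1 * (w ^ p) := by
        rw [hpsiw] at hfvw
        exact alg_star hc1 hc2 hψv hθa0 hvw hw'.symm hfvw
      have hwp : w ^ p ≤ w * (Y * Ma) := by
        have e1 : w ^ p = w * w ^ (p - 1) := by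
          nth_rewrite 2 [← Real.rpow_one w]
          rw [← Real.rpow_add hwpos]; ring_nf
        have hMaY : Y * Ma = Ma ^ (p - 1) := by
          rw [hYdef]
          nth_rewrite 2 [← Real.rpow_one Ma]
          rw [← Real.rpow_add hMa0]; ring_nf
        rw [e1, hMaY]
        have h2 : w ^ (p - 1) ≤ Ma ^ (p - 1) :=
          Real.rpow_le_rpow_of_nonpos hMa0 hbw (by linarith)
        exact mul_le_mul_of_nonneg_left h2 hw0
      have hfin : (w - v) * (2 * w) * (c1 * (p / 2 * Y)) ≤ c1 * (w * (Y * Ma)) := by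
        rw [← hθadef]
        calc (w - v) * (2 * w) * θa ≤ c1 * (w ^ p) := hkey
          _ ≤ c1 * (w * (Y * Ma)) := mul_le_mul_of_nonneg_left hwp hc1.le
      have hposC : 0 < c1 * Y * w := by positivity
      have hfin2 : c1 * Y * w * (p * (w - v)) ≤ c1 * Y * w * Ma := by
        linarith only [hfin]
      exact le_of_mul_le_mul_left hfin2 hposC
    rcases lt_trichotomy a 0 with ha | ha | ha
    · -- a < 0
      have hb : Ma = -a := by rw [hMaeq, abs_of_neg ha]
      have hva : |v - a| = v - a := abs_of_pos (by linarith)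
      have hwa : |w - a| = w - a := abs_of_pos (by linarith)
      rw [hva, hwa]
      rcases le_or_gt w Ma with hwb | hwb
      · have h2p : (0:ℝ) ≤ 2 / p := by positivity
        have hint := mul_nonneg (by linarith : (0:ℝ) ≤ 4 + 2 / p - 2)
          (by linarith : (0:ℝ) ≤ v - a)
        linarith only [hint, hwb, hb, hv0, ha]
      · have h1 := hstar hwb.le
        have := algA_neg hp0 hpK (show (0:ℝ) < -a by linarith) hv0
          (by rw [← hb]; exact h1) (by rw [hb] at hwb; exact hwb)
        linarith only [this]
    · exfalso; rw [ha, abs_zero] at hMaeq; linarith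
    · -- a > 0
      have hb : Ma = a := by rw [hMaeq, abs_of_pos ha]
      have hvlta : v < a := by
        have h9 : |v| < Ma := lt_of_le_of_lt hvMv hMM
        rw [hb] at h9
        calc v ≤ |v| := le_abs_self v
          _ < a := h9
      have hva : |v - a| = a - v := by rw [abs_of_neg (by linarith : v - a < 0)]; ring
      rcases le_or_gt w a with hwa | hwa
      · rw [hva, abs_of_nonpos (by linarith : w - a ≤ 0), neg_sub]
        have hint := mul_nonneg (by linarith : (0:ℝ) ≤ 4 + 2 / p - 1)
          (by linarith : (0:ℝ) ≤ a - v)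
        linarith only [hint, hvw]
      · rw [hva, abs_of_pos (by linarith : 0 < w - a)]
        have h1 : p * (w - v) ≤ a := by rw [← hb]; exact hstar (by rw [hb]; exact hwa.le)
        rcases le_or_gt (2 * Mv) a with hsplit | hsplit
        · exact algA_pos_i hp0 hpK h1 hsplit hvMv' hv0 hwa
        · have hMva : Mv ≤ a := by rw [← hb]; exact hMM.le
          have hrp2 : X * Mv ^ 2 ≤ Y * a ^ 2 := by
            have e2 : X * Mv ^ 2 = Mv ^ p := by
              rw [hXdef, ← Real.rpow_two, ← Real.rpow_add hMv0]; ring_nf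
            have e1 : Y * a ^ 2 = Ma ^ p := by
              rw [hYdef, ← hb, ← Real.rpow_two, ← Real.rpow_add hMa0]; ring_nf
            rw [e2, e1]
            exact Real.rpow_le_rpow hMv0.le hMM.le hp0.le
          have hKAXY : v * (X - Y) ≤ 3 * (a - Mv) * Y :=
            algA_pos_ii_step hY0 hMv0 hvMv' hv0 hYX hMva hsplit.le hrp2
          have hKA : v * (θv - θa) ≤ 3 * (a - Mv) * θa := by
            rw [hθvdef, hθadef]
            have hc1p : (0:ℝ) ≤ c1 * (p / 2) := by positivity
            linarith only [mul_le_mul_of_nonneg_left hKAXY hc1p]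
          exact algA_pos_ii_final hc2 hθa0 hwvA hKA hvMv' hMva hwa hK3

/-- Main scalar comparison lemma, general `q`. -/
lemma scalar_main {p ε : ℝ} (hp0 : 0 < p) (hp1 : p < 1) (hε : 0 < ε)
    {c1 c2 a q v w : ℝ} (hc1 : 0 < c1) (hc2 : 0 ≤ c2)
    (hv : v * (1 + c2 + c1 * psiDeriv p ε (v ^ 2)) = q)
    (hw : w * (1 + c2 + c1 * psiDeriv p ε (a ^ 2)) = q)
    (hfvw : (v - q) ^ 2 + c1 * psi p ε (v ^ 2) + c2 * v ^ 2 ≤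
      (w - q) ^ 2 + c1 * psi p ε (w ^ 2) + c2 * w ^ 2) :
    |w - a| ≤ (4 + 2 / p) * |v - a| := by
  rcases le_or_gt 0 q with hq | hq
  · exact scalar_main_nonneg hp0 hp1 hε hc1 hc2 hq hv hw hfvw
  · have h1 : (-v) * (1 + c2 + c1 * psiDeriv p ε ((-v) ^ 2)) = -q := by
      rw [neg_sq]; linear_combination -hv
    have h2 : (-w) * (1 + c2 + c1 * psiDeriv p ε ((-a) ^ 2)) = -q := by
      rw [neg_sq]; linear_combination -hw
    have e1 : ((-v : ℝ) - -q) ^ 2 = (v - q) ^ 2 := by ring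
    have e2 : ((-w : ℝ) - -q) ^ 2 = (w - q) ^ 2 := by ring
    have h3 : ((-v) - (-q)) ^ 2 + c1 * psi p ε ((-v) ^ 2) + c2 * (-v) ^ 2 ≤
        ((-w) - (-q)) ^ 2 + c1 * psi p ε ((-w) ^ 2) + c2 * (-w) ^ 2 := by
      rw [e1, e2, neg_sq, neg_sq]; exact hfvw
    have := scalar_main_nonneg hp0 hp1 hε hc1 hc2 (by linarith : (0:ℝ) ≤ -q) h1 h2 h3
    rw [show ((-w : ℝ) - -a) = a - w by ring, show ((-v : ℝ) - -a) = a - v by ring,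
      abs_sub_comm a w, abs_sub_comm a v] at this
    exact this

section Core

open MeasureTheory

variable {X : Type*} [MeasurableSpace X] {μ : Measure X}

lemma measurable_psi {p ε : ℝ} (hp0 : 0 < p) : Measurable (psi p ε) := by
  unfold psi
  refine Measurable.ite (measurableSet_lt measurable_id measurable_const) (by fun_prop) ?_
  exact (Real.continuous_rpow_const (by positivity)).measurable

lemma aesm_psi_comp {p ε : ℝ} (hp0 : 0 < p) {f : X → ℝ} (hf : AEMeasurable f μ) :
    AEStronglyMeasurable (fun x => psi p ε (f x ^ 2)) μ :=
  ((measurable_psi hp0).comp_aemeasurable (hf.pow_const 2)).aestronglyMeasurable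

lemma integrable_psi_comp [IsFiniteMeasure μ] {p ε : ℝ} (hp0 : 0 < p) (hp1 : p < 1)
    (hε : 0 < ε) {f : X → ℝ} (hf : MemLp f 2 μ) :
    Integrable (fun x => psi p ε (f x ^ 2)) μ := by
  set C := 1 + ε ^ p + p / 2 * ε ^ (p - 2) with hCdef
  have hC : 0 ≤ C := by
    have h1 : (0:ℝ) < ε ^ p := Real.rpow_pos_of_pos hε _
    have h2 : (0:ℝ) < ε ^ (p - 2) := Real.rpow_pos_of_pos hε _
    rw [hCdef]; positivity
  refine Integrable.mono' ((integrable_const C).add (hf.integrable_sq.const_mul C))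
    (aesm_psi_comp hp0 hf.aestronglyMeasurable.aemeasurable) (ae_of_all _ fun x => ?_)
  have h1 : 0 ≤ psi p ε (f x ^ 2) := psi_nonneg hp0 hp1 hε (sq_nonneg _)
  have h2 : psi p ε (f x ^ 2) ≤ C * (1 + f x ^ 2) := psi_le_bound hp0 hp1 hε (sq_nonneg _)
  rw [Real.norm_eq_abs, abs_of_nonneg h1]
  simp only [Pi.add_apply]
  nlinarith [h2, mul_nonneg hC (sq_nonneg (f x))]

lemma psiDeriv_comp_eq {p ε : ℝ} (hε : 0 < ε) (f : X → ℝ) :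
    (fun x => psiDeriv p ε (f x ^ 2)) = fun x => p / 2 * max ε |f x| ^ (p - 2) :=
  funext fun x => psiDeriv_sq_eq hε (f x)

lemma aesm_psiDeriv_comp {p ε : ℝ} (hε : 0 < ε) {f : X → ℝ} (hf : AEMeasurable f μ) :
    AEStronglyMeasurable (fun x => psiDeriv p ε (f x ^ 2)) μ := by
  rw [psiDeriv_comp_eq hε]
  have hcont : Continuous (fun s : ℝ => p / 2 * max ε |s| ^ (p - 2)) := by
    refine continuous_const.mul ?_
    refine (continuous_const.max continuous_abs).rpow_const (fun x => Or.inl ?_)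
    have : 0 < max ε |x| := lt_of_lt_of_le hε (le_max_left _ _)
    positivity
  exact (hcont.measurable.comp_aemeasurable hf).aestronglyMeasurable

lemma integrable_deriv_term [IsFiniteMeasure μ] {p ε : ℝ} (hp0 : 0 < p) (hp1 : p < 1)
    (hε : 0 < ε) {f h : X → ℝ} (hf : MemLp f 2 μ) (hh : MemLp h 2 μ) :
    Integrable (fun x => psiDeriv p ε (f x ^ 2) * (h x ^ 2 - f x ^ 2)) μ := by
  set D0 := p / 2 * ε ^ (p - 2) with hD0def
  have hD0 : 0 ≤ D0 := by
    have := Real.rpow_pos_of_pos hε (p - 2); rw [hD0def]; positivity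
  have hmeas : AEStronglyMeasurable (fun x => psiDeriv p ε (f x ^ 2) * (h x ^ 2 - f x ^ 2)) μ := by
    refine (aesm_psiDeriv_comp hε hf.aestronglyMeasurable.aemeasurable).mul ?_
    exact ((hh.aestronglyMeasurable.aemeasurable.pow_const 2).sub
      (hf.aestronglyMeasurable.aemeasurable.pow_const 2)).aestronglyMeasurable
  refine Integrable.mono' (((hh.integrable_sq.add hf.integrable_sq)).const_mul D0)
    hmeas (ae_of_all _ fun x => ?_)
  have h1 : 0 < psiDeriv p ε (f x ^ 2) := psiDeriv_pos hp0 hε (sq_nonneg _)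
  have h2 : psiDeriv p ε (f x ^ 2) ≤ D0 := psiDeriv_le hp0 hp1 hε (sq_nonneg _)
  rw [Real.norm_eq_abs, abs_mul, abs_of_pos h1]
  have h3 : |h x ^ 2 - f x ^ 2| ≤ h x ^ 2 + f x ^ 2 := by
    rw [abs_le]; constructor <;> nlinarith [sq_nonneg (h x), sq_nonneg (f x)]
  calc psiDeriv p ε (f x ^ 2) * |h x ^ 2 - f x ^ 2|
      ≤ D0 * (h x ^ 2 + f x ^ 2) :=
        mul_le_mul h2 h3 (abs_nonneg _) hD0
    _ = D0 * (h x ^ 2 + f x ^ 2) := rfl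

lemma integrable_F [IsFiniteMeasure μ] {p ε c1 c2 : ℝ} (hp0 : 0 < p) (hp1 : p < 1)
    (hε : 0 < ε) {qf f : X → ℝ} (hq : MemLp qf 2 μ) (hf : MemLp f 2 μ) :
    Integrable (fun x => (f x - qf x) ^ 2 + c1 * psi p ε (f x ^ 2) + c2 * f x ^ 2) μ :=
  (((hf.sub hq).integrable_sq).add
    ((integrable_psi_comp hp0 hp1 hε hf).const_mul c1)).add
    (hf.integrable_sq.const_mul c2)

lemma integrable_G [IsFiniteMeasure μ] {p ε c1 c2 : ℝ} (hp0 : 0 < p) (hp1 : p < 1)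
    (hε : 0 < ε) {qf uf f : X → ℝ} (hq : MemLp qf 2 μ) (hu : MemLp uf 2 μ)
    (hf : MemLp f 2 μ) :
    Integrable (fun x => (f x - qf x) ^ 2 +
      c1 * (psi p ε (uf x ^ 2) + psiDeriv p ε (uf x ^ 2) * (f x ^ 2 - uf x ^ 2)) +
      c2 * f x ^ 2) μ :=
  (((hf.sub hq).integrable_sq).add
    (((integrable_psi_comp hp0 hp1 hε hu).add
      (integrable_deriv_term hp0 hp1 hε hu hf)).const_mul c1)).add
    (hf.integrable_sq.const_mul c2)

lemma norm_sq_eq (z : Lp ℝ 2 μ) : ‖z‖ ^ 2 = ∫ x, (z x) ^ 2 ∂μ := by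
  rw [← real_inner_self_eq_norm_sq, MeasureTheory.L2.inner_def]
  simp only [RCLike.inner_apply, starRingEnd_apply, star_trivial]
  congr 1
  funext x
  ring

lemma integral_comp_congr {φ : X → ℝ → ℝ} {f g : X → ℝ} (h : f =ᵐ[μ] g) :
    ∫ x, φ x (f x) ∂μ = ∫ x, φ x (g x) ∂μ :=
  integral_congr_ae (h.mono fun x hx => by dsimp only; rw [hx])

/-- Key extraction principle: a global minimizer is an a.e. pointwise minimizer. -/
lemma ae_min_pointwise [IsFiniteMeasure μ] {φ : X → ℝ → ℝ} (v : Lp ℝ 2 μ) {g : X → ℝ}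
    (hg : MemLp g 2 μ)
    (hint : ∀ f : X → ℝ, MemLp f 2 μ → Integrable (fun x => φ x (f x)) μ)
    (hmin : ∀ f : X → ℝ, MemLp f 2 μ → ∫ x, φ x (v x) ∂μ ≤ ∫ x, φ x (f x) ∂μ) :
    ∀ᵐ x ∂μ, φ x (v x) ≤ φ x (g x) := by
  classical
  have hiv : Integrable (fun x => φ x (v x)) μ := hint _ (Lp.memLp v)
  have hig : Integrable (fun x => φ x (g x)) μ := hint g hg
  have key : ∀ S, MeasurableSet S → μ S < ⊤ →
      0 ≤ ∫ x in S, (φ x (g x) - φ x (v x)) ∂μ := by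
    intro S hS _
    have hpw : S.piecewise g ⇑v = S.indicator g + Sᶜ.indicator ⇑v := by
      funext x
      by_cases hx : x ∈ S <;> simp [Set.piecewise, Set.indicator, hx]
    have hmix : MemLp (S.piecewise g ⇑v) 2 μ := by
      rw [hpw]
      exact (hg.indicator hS).add ((Lp.memLp v).indicator hS.compl)
    have h1 := hmin _ hmix
    have h2 : ∫ x, φ x (S.piecewise g ⇑v x) ∂μ - ∫ x, φ x (v x) ∂μ =
        ∫ x in S, (φ x (g x) - φ x (v x)) ∂μ := by
      rw [← integral_sub (hint _ hmix) hiv, ← integral_indicator hS]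
      refine integral_congr_ae (ae_of_all _ fun x => ?_)
      by_cases hx : x ∈ S <;> simp [Set.piecewise, Set.indicator, hx]
    linarith [h1, h2]
  have hae := ae_nonneg_of_forall_setIntegral_nonneg (hig.sub hiv) key
  filter_upwards [hae] with x hx
  simpa using hx

end Core

set_option maxHeartbeats 1000000 in
lemma core_bound {X : Type*} [MeasurableSpace X] {μ : MeasureTheory.Measure X}
    [MeasureTheory.IsFiniteMeasure μ]
    {p ε c1 c2 : ℝ} (hp0 : 0 < p) (hp1 : p < 1) (hε : 0 < ε) (hc1 : 0 < c1) (hc2 : 0 ≤ c2)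
    (u b v wstar : MeasureTheory.Lp ℝ 2 μ)
    (hv : ∀ w : MeasureTheory.Lp ℝ 2 μ,
      ‖v - b‖ ^ 2 + c1 * ∫ x, psi p ε (v x ^ 2) ∂μ + c2 * ‖v‖ ^ 2 ≤
      ‖w - b‖ ^ 2 + c1 * ∫ x, psi p ε (w x ^ 2) ∂μ + c2 * ‖w‖ ^ 2)
    (hws : ∀ w : MeasureTheory.Lp ℝ 2 μ,
      ‖wstar - b‖ ^ 2 + c1 * (∫ x, (psi p ε (u x ^ 2) +
        psiDeriv p ε (u x ^ 2) * (wstar x ^ 2 - u x ^ 2)) ∂μ) + c2 * ‖wstar‖ ^ 2 ≤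
      ‖w - b‖ ^ 2 + c1 * (∫ x, (psi p ε (u x ^ 2) +
        psiDeriv p ε (u x ^ 2) * (w x ^ 2 - u x ^ 2)) ∂μ) + c2 * ‖w‖ ^ 2) :
    ‖wstar - u‖ ^ 2 ≤ (4 + 2 / p) ^ 2 * ‖v - u‖ ^ 2 := by
  classical
  open MeasureTheory in
  have hqmem : MemLp (⇑b) 2 μ := Lp.memLp b
  have humem : MemLp (⇑u) 2 μ := Lp.memLp u
  set φF : X → ℝ → ℝ := fun x y => (y - b x) ^ 2 + c1 * psi p ε (y ^ 2) + c2 * y ^ 2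
    with hφF
  set φG : X → ℝ → ℝ := fun x y => (y - b x) ^ 2 +
      c1 * (psi p ε (u x ^ 2) + psiDeriv p ε (u x ^ 2) * (y ^ 2 - u x ^ 2)) + c2 * y ^ 2
    with hφG
  have hintF : ∀ f : X → ℝ, MemLp f 2 μ → Integrable (fun x => φF x (f x)) μ :=
    fun f hf => integrable_F hp0 hp1 hε hqmem hf
  have hintG : ∀ f : X → ℝ, MemLp f 2 μ → Integrable (fun x => φG x (f x)) μ :=
    fun f hf => integrable_G hp0 hp1 hε hqmem humem hf
  -- norm identities
  have hnorm : ∀ w : Lp ℝ 2 μ, ‖w - b‖ ^ 2 = ∫ x, (w x - b x) ^ 2 ∂μ := by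
    intro w
    rw [norm_sq_eq (w - b)]
    refine integral_congr_ae ?_
    filter_upwards [Lp.coeFn_sub w b] with x hx
    rw [hx]
    simp
  -- representation of the F functional
  have hFrepr : ∀ w : Lp ℝ 2 μ, ∫ x, φF x (w x) ∂μ =
      ‖w - b‖ ^ 2 + c1 * ∫ x, psi p ε (w x ^ 2) ∂μ + c2 * ‖w‖ ^ 2 := by
    intro w
    have i1 : Integrable (fun x => (w x - b x) ^ 2) μ :=
      ((Lp.memLp w).sub hqmem).integrable_sq
    have i2 : Integrable (fun x => c1 * psi p ε (w x ^ 2)) μ :=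
      (integrable_psi_comp hp0 hp1 hε (Lp.memLp w)).const_mul c1
    have i3 : Integrable (fun x => c2 * w x ^ 2) μ :=
      ((Lp.memLp w).integrable_sq).const_mul c2
    have t2 := integral_add i1 i2
    have t1 := integral_add (i1.add i2) i3
    simp only [Pi.add_apply] at t1 t2
    simp only [hφF]
    rw [t1, t2, hnorm w, integral_const_mul, integral_const_mul, norm_sq_eq w]
  -- representation of the G functional
  have hGrepr : ∀ w : Lp ℝ 2 μ, ∫ x, φG x (w x) ∂μ =
      ‖w - b‖ ^ 2 + c1 * (∫ x, (psi p ε (u x ^ 2) +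
        psiDeriv p ε (u x ^ 2) * (w x ^ 2 - u x ^ 2)) ∂μ) + c2 * ‖w‖ ^ 2 := by
    intro w
    have i1 : Integrable (fun x => (w x - b x) ^ 2) μ :=
      ((Lp.memLp w).sub hqmem).integrable_sq
    have i2 : Integrable (fun x => c1 * (psi p ε (u x ^ 2) +
        psiDeriv p ε (u x ^ 2) * (w x ^ 2 - u x ^ 2))) μ :=
      ((integrable_psi_comp hp0 hp1 hε humem).add
        (integrable_deriv_term hp0 hp1 hε humem (Lp.memLp w))).const_mul c1
    have i3 : Integrable (fun x => c2 * w x ^ 2) μ :=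
      ((Lp.memLp w).integrable_sq).const_mul c2
    have t2 := integral_add i1 i2
    have t1 := integral_add (i1.add i2) i3
    simp only [Pi.add_apply] at t1 t2
    simp only [hφG]
    rw [t1, t2, hnorm w, integral_const_mul, integral_const_mul, norm_sq_eq w]
  -- minimality in integral form
  have hminF : ∀ f : X → ℝ, MemLp f 2 μ →
      ∫ x, φF x (v x) ∂μ ≤ ∫ x, φF x (f x) ∂μ := by
    intro f hf
    have h1 := hv (hf.toLp f)
    rw [← hFrepr v, ← hFrepr (hf.toLp f)] at h1
    rwa [integral_comp_congr (φ := φF) hf.coeFn_toLp] at h1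
  have hminG : ∀ f : X → ℝ, MemLp f 2 μ →
      ∫ x, φG x (wstar x) ∂μ ≤ ∫ x, φG x (f x) ∂μ := by
    intro f hf
    have h1 := hws (hf.toLp f)
    rw [← hGrepr wstar, ← hGrepr (hf.toLp f)] at h1
    rwa [integral_comp_congr (φ := φG) hf.coeFn_toLp] at h1
  -- pointwise extraction
  have hE1 : ∀ᵐ x ∂μ, φF x (v x) ≤ φF x (wstar x) :=
    ae_min_pointwise v (Lp.memLp wstar) hintF hminF
  have hE2 : ∀ᵐ x ∂μ, ∀ h' : ℚ, φF x (v x) ≤ φF x (v x + h') := by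
    rw [ae_all_iff]
    intro h'
    have hg : MemLp (fun x => v x + (h' : ℝ)) 2 μ := (Lp.memLp v).add (memLp_const _)
    exact ae_min_pointwise v hg hintF hminF
  have hE3 : ∀ᵐ x ∂μ, ∀ h' : ℚ, φG x (wstar x) ≤ φG x (wstar x + h') := by
    rw [ae_all_iff]
    intro h'
    have hg : MemLp (fun x => wstar x + (h' : ℝ)) 2 μ :=
      (Lp.memLp wstar).add (memLp_const _)
    exact ae_min_pointwise wstar hg hintG hminG
  -- main pointwise bound
  have hmain : ∀ᵐ x ∂μ, (wstar x - u x) ^ 2 ≤ (4 + 2 / p) ^ 2 * (v x - u x) ^ 2 := by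
    filter_upwards [hE1, hE2, hE3] with x h1 h2 h3
    have hsv : v x * (1 + c2 + c1 * psiDeriv p ε (v x ^ 2)) = b x := by
      apply stat_v hp0 hp1 hε hc1 hc2
      intro h'
      simpa [hφF] using h2 h'
    have hDpos : 0 < psiDeriv p ε (u x ^ 2) := psiDeriv_pos hp0 hε (sq_nonneg _)
    have hsw : wstar x * (1 + c2 + c1 * psiDeriv p ε (u x ^ 2)) = b x := by
      have hT : 0 ≤ c1 * psiDeriv p ε (u x ^ 2) + c2 := by positivity
      have hq := stat_quad hT (x := wstar x) (q := b x) ?_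
      · linarith [hq]
      intro h'
      have h4 := h3 h'
      simp only [hφG] at h4
      nlinarith [h4]
    have hfvw : (v x - b x) ^ 2 + c1 * psi p ε (v x ^ 2) + c2 * v x ^ 2 ≤
        (wstar x - b x) ^ 2 + c1 * psi p ε (wstar x ^ 2) + c2 * wstar x ^ 2 := by
      simpa [hφF] using h1
    have habs := scalar_main hp0 hp1 hε hc1 hc2 hsv hsw hfvw
    have h4 : |wstar x - u x| ^ 2 ≤ ((4 + 2 / p) * |v x - u x|) ^ 2 :=
      pow_le_pow_left₀ (abs_nonneg _) habs 2
    rw [mul_pow, sq_abs, sq_abs] at h4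
    exact h4
  -- integrate the pointwise bound
  have hi1 : Integrable (fun x => (wstar x - u x) ^ 2) μ :=
    ((Lp.memLp wstar).sub humem).integrable_sq
  have hi2 : Integrable (fun x => (4 + 2 / p) ^ 2 * (v x - u x) ^ 2) μ :=
    (((Lp.memLp v).sub humem).integrable_sq).const_mul _
  have hmono := integral_mono_ae hi1 hi2 hmain
  have eL : ‖wstar - u‖ ^ 2 = ∫ x, (wstar x - u x) ^ 2 ∂μ := by
    rw [norm_sq_eq (wstar - u)]
    refine integral_congr_ae ?_
    filter_upwards [Lp.coeFn_sub wstar u] with x hx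
    rw [hx]; simp
  have eR : ∫ x, (4 + 2 / p) ^ 2 * (v x - u x) ^ 2 ∂μ =
      (4 + 2 / p) ^ 2 * ‖v - u‖ ^ 2 := by
    rw [integral_const_mul]
    congr 1
    rw [norm_sq_eq (v - u)]
    refine (integral_congr_ae ?_).symm
    filter_upwards [Lp.coeFn_sub v u] with x hx
    rw [hx]; simp
  rw [eL, ← eR]
  exact hmono


/-- `φ_ε(w) = β ∫_Ω ψ_ε(w(x)²) dx + (α/2)‖w‖²` on `L²(Ω)`. -/
noncomputable def phiEps {d : ℕ} (Ω : Set (EuclideanSpace ℝ (Fin d)))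
    (p ε β α : ℝ) (w : Lp ℝ 2 (volume.restrict Ω)) : ℝ :=
  β * ∫ x, psi p ε (w x ^ 2) ∂(volume.restrict Ω) + α / 2 * ‖w‖ ^ 2

set_option maxHeartbeats 1000000 in
/-- if `v` globally minimizes `w ↦ (1/(2r))‖w − (u − r g)‖² + φ_ε(w)` and
`w*` globally minimizes the convexified functional at `u`, then
`(g, v − u) + φ_ε(v) − φ_ε(u) ≤ −(1/(2r))‖v − u‖² ≤ −(1/(2r(4 + 2/p)²))‖w* − u‖²`. -/
theorem prox_decrease_chain
    {d : ℕ} (hd : 1 ≤ d) (Ω : Set (EuclideanSpace ℝ (Fin d)))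
    (hΩ_open : IsOpen Ω) (hΩ_conn : IsConnected Ω) (hΩ_bdd : Bornology.IsBounded Ω)
    (p ε β α r : ℝ) (hp0 : 0 < p) (hp1 : p < 1) (hε : 0 < ε) (hβ : 0 < β)
    (hα : 0 ≤ α) (hr : 0 < r)
    (u g v wstar : Lp ℝ 2 (volume.restrict Ω))
    (hv : ∀ w : Lp ℝ 2 (volume.restrict Ω),
      1 / (2 * r) * ‖v - (u - r • g)‖ ^ 2 + phiEps Ω p ε β α v ≤
        1 / (2 * r) * ‖w - (u - r • g)‖ ^ 2 + phiEps Ω p ε β α w)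
    (hwstar : ∀ w : Lp ℝ 2 (volume.restrict Ω),
      1 / (2 * r) * ‖wstar - (u - r • g)‖ ^ 2 +
          β * ∫ x, (psi p ε (u x ^ 2) + psiDeriv p ε (u x ^ 2) * (wstar x ^ 2 - u x ^ 2))
            ∂(volume.restrict Ω) + α / 2 * ‖wstar‖ ^ 2 ≤
        1 / (2 * r) * ‖w - (u - r • g)‖ ^ 2 +
          β * ∫ x, (psi p ε (u x ^ 2) + psiDeriv p ε (u x ^ 2) * (w x ^ 2 - u x ^ 2))
            ∂(volume.restrict Ω) + α / 2 * ‖w‖ ^ 2) :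
    (⟪g, v - u⟫ : ℝ) + phiEps Ω p ε β α v - phiEps Ω p ε β α u ≤
        -(1 / (2 * r)) * ‖v - u‖ ^ 2 ∧
      -(1 / (2 * r)) * ‖v - u‖ ^ 2 ≤
        -(1 / (2 * r * (4 + 2 / p) ^ 2)) * ‖wstar - u‖ ^ 2 := by
  haveI : IsFiniteMeasure (volume.restrict Ω) := by
    constructor
    rw [Measure.restrict_apply_univ]
    exact hΩ_bdd.measure_lt_top
  constructor
  · -- first inequality : pure Hilbert-space algebra from `hv u`
    have h := hv u
    have e1 : v - (u - r • g) = (v - u) + r • g := by abel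
    have e2 : u - (u - r • g) = r • g := by abel
    rw [e1, e2, norm_add_sq_real] at h
    have e3 : (⟪v - u, r • g⟫ : ℝ) = r * ⟪g, v - u⟫ := by
      rw [real_inner_smul_right, real_inner_comm]
    rw [e3] at h
    have e4 : 1 / (2 * r) * (‖v - u‖ ^ 2 + 2 * (r * ⟪g, v - u⟫) + ‖r • g‖ ^ 2) =
        1 / (2 * r) * ‖v - u‖ ^ 2 + ⟪g, v - u⟫ + 1 / (2 * r) * ‖r • g‖ ^ 2 := by
      field_simp
    rw [e4] at h
    linarith [h]
  · -- second inequality via the core bound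
    have hconv : ∀ N1 I1 M1 N2 I2 M2 : ℝ,
        1 / (2 * r) * N1 + (β * I1 + α / 2 * M1) ≤
          1 / (2 * r) * N2 + (β * I2 + α / 2 * M2) →
        N1 + 2 * r * β * I1 + r * α * M1 ≤ N2 + 2 * r * β * I2 + r * α * M2 := by
      intro N1 I1 M1 N2 I2 M2 h
      have h2 := mul_le_mul_of_nonneg_left h (by positivity : (0:ℝ) ≤ 2 * r)
      have e1 : 2 * r * (1 / (2 * r) * N1 + (β * I1 + α / 2 * M1)) =
          N1 + 2 * r * β * I1 + r * α * M1 := by field_simp; ring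
      have e2 : 2 * r * (1 / (2 * r) * N2 + (β * I2 + α / 2 * M2)) =
          N2 + 2 * r * β * I2 + r * α * M2 := by field_simp; ring
      linarith [h2, e1, e2]
    have hv' : ∀ w : Lp ℝ 2 (volume.restrict Ω),
        ‖v - (u - r • g)‖ ^ 2 + 2 * r * β * ∫ x, psi p ε (v x ^ 2) ∂(volume.restrict Ω) +
          r * α * ‖v‖ ^ 2 ≤
        ‖w - (u - r • g)‖ ^ 2 + 2 * r * β * ∫ x, psi p ε (w x ^ 2) ∂(volume.restrict Ω) +
          r * α * ‖w‖ ^ 2 := by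
      intro w
      have h := hv w
      simp only [phiEps] at h
      exact hconv _ _ _ _ _ _ h
    have hws' : ∀ w : Lp ℝ 2 (volume.restrict Ω),
        ‖wstar - (u - r • g)‖ ^ 2 + 2 * r * β * (∫ x, (psi p ε (u x ^ 2) +
          psiDeriv p ε (u x ^ 2) * (wstar x ^ 2 - u x ^ 2)) ∂(volume.restrict Ω)) +
          r * α * ‖wstar‖ ^ 2 ≤
        ‖w - (u - r • g)‖ ^ 2 + 2 * r * β * (∫ x, (psi p ε (u x ^ 2) +
          psiDeriv p ε (u x ^ 2) * (w x ^ 2 - u x ^ 2)) ∂(volume.restrict Ω)) +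
          r * α * ‖w‖ ^ 2 := by
      intro w
      have h := hwstar w
      exact hconv _ _ _ _ _ _ (by linarith [h])
    have hcore := core_bound hp0 hp1 hε (by positivity : (0:ℝ) < 2 * r * β)
      (by positivity : (0:ℝ) ≤ r * α) u (u - r • g) v wstar hv' hws'
    have hKpos : (0:ℝ) < 4 + 2 / p := by positivity
    rw [neg_mul, neg_mul, neg_le_neg_iff]
    have step : 1 / (2 * r * (4 + 2 / p) ^ 2) * ‖wstar - u‖ ^ 2 ≤
        1 / (2 * r * (4 + 2 / p) ^ 2) * ((4 + 2 / p) ^ 2 * ‖v - u‖ ^ 2) :=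
      mul_le_mul_of_nonneg_left hcore (by positivity)
    have e : 1 / (2 * r * (4 + 2 / p) ^ 2) * ((4 + 2 / p) ^ 2 * ‖v - u‖ ^ 2) =
        1 / (2 * r) * ‖v - u‖ ^ 2 := by
      field_simp
    linarith [step, e]
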